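/- Let c be pairwise-distinct positive conductances on the complete graph K_n and let MaxST(c) be the spanning tree maximizing ∏_{e∈T} c(e). Let ε₀ ∈ (0,1) and suppose there are m ≥ 1 edges e = (u,v) ∉ MaxST(c) that are ε₀-significant, i.e. some edge f on the path in MaxST(c) from u to v satisfies c(e)/c(f) ≥ ε₀. Then the weighted spanning tree measure, which assigns to each spanning tree T probability proportional to ∏_{e∈T} c(e), satisfies P(WST(c) = MaxST(c)) ≤ 1/(1 + m·ε₀). -/

import Mathlib

/-- `T` is a spanning tree of the graph `G`: its edges form a subset of `G`'s edges and
the graph generated by those edges is a tree on the full vertex set. -/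
def IsSpanningTree {V : Type*} [Fintype V] (G : SimpleGraph V) (T : Finset (Sym2 V)) : Prop :=
  ↑T ⊆ G.edgeSet ∧ (SimpleGraph.fromEdgeSet (↑T : Set (Sym2 V))).IsTree

open SimpleGraph


private lemma aux_reach {V : Type*} {G G' : SimpleGraph V} {a b : V}
    (hG' : ∀ x y : V, G.Adj x y → s(x, y) ≠ s(a, b) → G'.Adj x y) :
    ∀ {x y : V} (q : G.Walk x y), s(a, b) ∉ q.edges → G'.Reachable x y := by
  intro x y q
  induction q with
  | nil => exact fun _ => Reachable.refl _
  | cons h p ih =>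
    intro hne
    rw [Walk.edges_cons, List.mem_cons] at hne
    push_neg at hne
    exact ((hG' _ _ h (Ne.symm hne.1)).reachable).trans (ih hne.2)

private lemma aux_split {V : Type*} {G G' : SimpleGraph V} {a b : V}
    (hG' : ∀ x y : V, G.Adj x y → s(x, y) ≠ s(a, b) → G'.Adj x y) :
    ∀ {x y : V} (q : G.Walk x y), q.edges.Nodup → s(a, b) ∈ q.edges →
      (G'.Reachable x a ∧ G'.Reachable b y) ∨ (G'.Reachable x b ∧ G'.Reachable a y) := by
  intro x y q
  induction q with
  | nil => simp
  | @cons x w y h p ih =>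
    intro hnd hmem
    rw [Walk.edges_cons] at hnd hmem
    rw [List.nodup_cons] at hnd
    by_cases hef : s(a, b) = s(x, w)
    · have hp : s(a, b) ∉ p.edges := by rw [hef]; exact hnd.1
      have hr := aux_reach hG' p hp
      rw [Sym2.eq_iff] at hef
      rcases hef with ⟨ha, hb⟩ | ⟨ha, hb⟩
      · subst ha; subst hb; exact Or.inl ⟨Reachable.refl _, hr⟩
      · subst ha; subst hb; exact Or.inr ⟨Reachable.refl _, hr⟩
    · have hmem' : s(a, b) ∈ p.edges := by
        rcases List.mem_cons.mp hmem with h1 | h1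
        · exact absurd h1 hef
        · exact h1
      have hadj := (hG' _ _ h (fun hh => hef hh.symm)).reachable
      rcases ih hnd.2 hmem' with ⟨h1, h2⟩ | ⟨h1, h2⟩
      · exact Or.inl ⟨hadj.trans h1, h2⟩
      · exact Or.inr ⟨hadj.trans h1, h2⟩

private lemma aux_connect {V : Type*} {G G' : SimpleGraph V} {a b : V}
    (hG' : ∀ x y : V, G.Adj x y → s(x, y) ≠ s(a, b) → G'.Adj x y)
    (hab : G'.Reachable a b) :
    ∀ {x y : V}, G.Reachable x y → G'.Reachable x y := by
  intro x y hxy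
  obtain ⟨p⟩ := hxy
  induction p with
  | nil => exact Reachable.refl _
  | @cons x w y h p ih =>
    refine Reachable.trans ?_ ih
    by_cases hef : s(x, w) = s(a, b)
    · rw [Sym2.eq_iff] at hef
      rcases hef with ⟨ha, hb⟩ | ⟨ha, hb⟩
      · subst ha; subst hb; exact hab
      · subst ha; subst hb; exact hab.symm
    · exact (hG' _ _ h hef).reachable

private lemma swap_spanning {V : Type*} [Fintype V] [DecidableEq (Sym2 V)] {T₀ : Finset (Sym2 V)}
    (hT : (fromEdgeSet (↑T₀ : Set (Sym2 V))).IsTree)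
    {u v : V} {e f : Sym2 V} (he : e = s(u, v)) (hd : ¬e.IsDiag) (heT : e ∉ T₀)
    {q : (fromEdgeSet (↑T₀ : Set (Sym2 V))).Walk u v} (hq : q.IsPath) (hfq : f ∈ q.edges) :
    f ∈ T₀ ∧ (fromEdgeSet (↑(insert e (T₀.erase f)) : Set (Sym2 V))).IsTree := by
  classical
  have hfE : f ∈ (fromEdgeSet (↑T₀ : Set (Sym2 V))).edgeSet := q.edges_subset_edgeSet hfq
  rw [edgeSet_fromEdgeSet, Set.mem_diff] at hfE
  obtain ⟨hfT, hfd⟩ := hfE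
  rw [Sym2.mem_diagSet] at hfd
  revert hfq hfT hfd
  induction f using Sym2.ind with
  | _ a b =>
  intro hfq hfT hfd
  have hab' : a ≠ b := by simpa using hfd
  have huv : u ≠ v := by rw [he] at hd; simpa using hd
  have hG'adj : ∀ x y : V, (fromEdgeSet (↑T₀ : Set (Sym2 V))).Adj x y → s(x, y) ≠ s(a, b) →
      (fromEdgeSet (↑(insert e (T₀.erase s(a, b))) : Set (Sym2 V))).Adj x y := by
    intro x y hxy hne
    rw [fromEdgeSet_adj] at hxy
    rw [fromEdgeSet_adj]
    exact ⟨Finset.mem_coe.mpr (Finset.mem_insert_of_mem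
      (Finset.mem_erase.mpr ⟨hne, Finset.mem_coe.mp hxy.1⟩)), hxy.2⟩
  have huvAdj : (fromEdgeSet (↑(insert e (T₀.erase s(a, b))) : Set (Sym2 V))).Adj u v := by
    rw [fromEdgeSet_adj]
    exact ⟨Finset.mem_coe.mpr (he ▸ Finset.mem_insert_self e _), huv⟩
  have hab : (fromEdgeSet (↑(insert e (T₀.erase s(a, b))) : Set (Sym2 V))).Reachable a b := by
    rcases aux_split hG'adj q hq.isTrail.edges_nodup hfq with ⟨h1, h2⟩ | ⟨h1, h2⟩
    · exact (h1.symm.trans huvAdj.reachable).trans h2.symm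
    · exact h2.trans (huvAdj.symm.reachable.trans h1)
  refine ⟨Finset.mem_coe.mp hfT, ?_, ?_⟩
  · -- connected
    have hpre : (fromEdgeSet (↑(insert e (T₀.erase s(a, b))) : Set (Sym2 V))).Preconnected :=
      fun x y => aux_connect hG'adj hab (hT.isConnected.preconnected x y)
    haveI : Nonempty V := hT.isConnected.nonempty
    exact ⟨hpre⟩
  · -- acyclic
    intro w cyc hcyc
    by_cases hec : e ∈ cyc.edges
    · have hbridge : (fromEdgeSet (↑(insert e (T₀.erase s(a, b))) : Set (Sym2 V))).IsBridge
          s(u, v) := by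
        refine isBridge_iff.mpr ?_
        rintro ⟨r⟩
        have hsub2 : ∀ g ∈ r.edges,
            g ∈ (fromEdgeSet (↑T₀ : Set (Sym2 V))).edgeSet ∧ g ≠ s(a, b) := by
          intro g hg
          have hmem := r.edges_subset_edgeSet hg
          rw [edgeSet_deleteEdges, Set.mem_diff, edgeSet_fromEdgeSet,
            Set.mem_diff] at hmem
          obtain ⟨⟨hg1, hg2⟩, hg3⟩ := hmem
          rw [Sym2.mem_diagSet] at hg2
          have hgne : g ≠ e := by
            intro hge
            exact hg3 (by rw [hge, he]; exact Set.mem_singleton _)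
          have hg1' : g ∈ insert e (T₀.erase s(a, b)) := Finset.mem_coe.mp hg1
          rw [Finset.mem_insert] at hg1'
          rcases hg1' with h1 | h1
          · exact absurd h1 hgne
          · have hgT : g ∈ (fromEdgeSet (↑T₀ : Set (Sym2 V))).edgeSet := by
              rw [edgeSet_fromEdgeSet, Set.mem_diff]
              exact ⟨Finset.mem_coe.mpr (Finset.mem_of_mem_erase h1), hg2⟩
            exact ⟨hgT, (Finset.mem_erase.mp h1).1⟩
        have hsub : ∀ g ∈ r.edges, g ∈ (fromEdgeSet (↑T₀ : Set (Sym2 V))).edgeSet :=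
          fun g hg => (hsub2 g hg).1
        have hqq : q = (r.transfer _ hsub).bypass :=
          (hT.existsUnique_path u v).unique hq (Walk.bypass_isPath _)
        have hmem : s(a, b) ∈ (r.transfer _ hsub).bypass.edges := hqq ▸ hfq
        have hmem2 := Walk.edges_bypass_subset _ hmem
        rw [Walk.edges_transfer] at hmem2
        exact (hsub2 _ hmem2).2 rfl
      have hnm := hbridge.notMem_edges_of_isCycle hcyc
      rw [← he] at hnm
      exact hnm hec
    · have hsub : ∀ g ∈ cyc.edges, g ∈ (fromEdgeSet (↑T₀ : Set (Sym2 V))).edgeSet := by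
        intro g hg
        have hmem := cyc.edges_subset_edgeSet hg
        rw [edgeSet_fromEdgeSet, Set.mem_diff] at hmem
        obtain ⟨hg1, hg2⟩ := hmem
        have hg1' : g ∈ insert e (T₀.erase s(a, b)) := Finset.mem_coe.mp hg1
        rw [Finset.mem_insert] at hg1'
        rcases hg1' with h1 | h1
        · exact absurd (h1 ▸ hg) hec
        · rw [edgeSet_fromEdgeSet, Set.mem_diff]
          exact ⟨Finset.mem_coe.mpr (Finset.mem_of_mem_erase h1), hg2⟩
      exact hT.IsAcyclic (cyc.transfer _ hsub) (hcyc.transfer hsub)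
open Classical in
theorem stmt_1 {V : Type*} [Fintype V] [Nonempty V]
    (c : Sym2 V → ℝ)
    (hpos : ∀ e : Sym2 V, ¬ e.IsDiag → 0 < c e)
    (hinj : ∀ e f : Sym2 V, ¬ e.IsDiag → ¬ f.IsDiag → c e = c f → e = f)
    (T₀ : Finset (Sym2 V)) (hT₀ : IsSpanningTree (⊤ : SimpleGraph V) T₀)
    (hmax : ∀ T, IsSpanningTree (⊤ : SimpleGraph V) T → T ≠ T₀ →
      ∏ e ∈ T, c e < ∏ e ∈ T₀, c e)
    (ε₀ : ℝ) (hε₀ : 0 < ε₀) (hε₁ : ε₀ < 1)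
    (m : ℕ) (hm : 1 ≤ m)
    (S : Finset (Sym2 V)) (hScard : S.card = m)
    (hSsig : ∀ e ∈ S, ¬ e.IsDiag ∧ e ∉ T₀ ∧
      ∃ u v : V, e = s(u, v) ∧
        ∃ q : (SimpleGraph.fromEdgeSet (↑T₀ : Set (Sym2 V))).Walk u v,
          q.IsPath ∧ ∃ f ∈ q.edges, ε₀ ≤ c e / c f) :
    (∏ e ∈ T₀, c e) /
      (∑ T ∈ Finset.univ.filter (fun T => IsSpanningTree (⊤ : SimpleGraph V) T),
        ∏ e ∈ T, c e) ≤ 1 / (1 + m * ε₀) := by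
  classical
  have hT₀d : ∀ g ∈ T₀, ¬ g.IsDiag := by
    intro g hg
    have h := hT₀.1 (Finset.mem_coe.mpr hg)
    rwa [SimpleGraph.edgeSet_top, Set.mem_compl_iff, Sym2.mem_diagSet] at h
  have hP₀pos : 0 < ∏ x ∈ T₀, c x := Finset.prod_pos fun x hx => hpos x (hT₀d x hx)
  choose hdiag hnot u v he q hq f hfmem hfε using hSsig
  set g : Sym2 V → Finset (Sym2 V) := fun e =>
    if h : e ∈ S then insert e (T₀.erase (f e h)) else ∅ with hgdef
  have key : ∀ e (h : e ∈ S), IsSpanningTree (⊤ : SimpleGraph V) (g e) ∧ e ∈ g e ∧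
      ε₀ * ∏ x ∈ T₀, c x ≤ ∏ x ∈ g e, c x := by
    intro e h
    obtain ⟨hfT, htree⟩ :=
      swap_spanning hT₀.2 (he e h) (hdiag e h) (hnot e h) (hq e h) (hfmem e h)
    have hge : g e = insert e (T₀.erase (f e h)) := dif_pos h
    have hne : e ∉ T₀.erase (f e h) := fun hx => hnot e h (Finset.mem_of_mem_erase hx)
    refine ⟨⟨?_, by rw [hge]; exact htree⟩, by rw [hge]; exact Finset.mem_insert_self _ _, ?_⟩
    · rw [hge]
      intro x hx
      rw [SimpleGraph.edgeSet_top, Set.mem_compl_iff, Sym2.mem_diagSet]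
      rcases Finset.mem_insert.mp (Finset.mem_coe.mp hx) with hx' | hx'
      · exact hx' ▸ hdiag e h
      · exact hT₀d x (Finset.mem_of_mem_erase hx')
    · rw [hge, Finset.prod_insert hne]
      have h1 : ∏ x ∈ T₀, c x = c (f e h) * ∏ x ∈ T₀.erase (f e h), c x :=
        (Finset.mul_prod_erase T₀ c hfT).symm
      have hcf : 0 < c (f e h) := hpos _ (hT₀d _ hfT)
      have hprodpos : (0:ℝ) ≤ ∏ x ∈ T₀.erase (f e h), c x :=
        le_of_lt (Finset.prod_pos fun x hx => hpos x (hT₀d x (Finset.mem_of_mem_erase hx)))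
      have h2 : ε₀ * (c (f e h) * ∏ x ∈ T₀.erase (f e h), c x) ≤
          (c e / c (f e h)) * (c (f e h) * ∏ x ∈ T₀.erase (f e h), c x) :=
        mul_le_mul_of_nonneg_right (hfε e h) (by positivity)
      have h3 : (c e / c (f e h)) * (c (f e h) * ∏ x ∈ T₀.erase (f e h), c x) =
          c e * ∏ x ∈ T₀.erase (f e h), c x := by
        field_simp
      rw [h1]
      rw [h3] at h2
      exact h2
  have hT₀img : T₀ ∉ S.image g := by
    intro hmem
    obtain ⟨e, heS, hge⟩ := Finset.mem_image.mp hmem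
    have heg : e ∈ g e := (key e heS).2.1
    rw [hge] at heg
    exact hnot e heS heg
  have hAsub : insert T₀ (S.image g) ⊆
      Finset.univ.filter (fun T => IsSpanningTree (⊤ : SimpleGraph V) T) := by
    intro T hT
    rcases Finset.mem_insert.mp hT with rfl | hT'
    · exact Finset.mem_filter.mpr ⟨Finset.mem_univ _, hT₀⟩
    · obtain ⟨e, heS, rfl⟩ := Finset.mem_image.mp hT'
      exact Finset.mem_filter.mpr ⟨Finset.mem_univ _, (key e heS).1⟩
  have hnonneg : ∀ T ∈ Finset.univ.filter (fun T => IsSpanningTree (⊤ : SimpleGraph V) T),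
      0 ≤ ∏ x ∈ T, c x := by
    intro T hT
    have hsub := (Finset.mem_filter.mp hT).2.1
    refine le_of_lt (Finset.prod_pos fun x hx => hpos x ?_)
    have hx' := hsub (Finset.mem_coe.mpr hx)
    rwa [SimpleGraph.edgeSet_top, Set.mem_compl_iff, Sym2.mem_diagSet] at hx'
  have hsum2 : ∑ T ∈ S.image g, ∏ x ∈ T, c x = ∑ e ∈ S, ∏ x ∈ g e, c x := by
    refine Finset.sum_image ?_
    intro e1 h1 e2 h2 hgeq
    by_contra hne
    have he1 : e1 ∈ g e2 := hgeq ▸ (key e1 h1).2.1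
    have hge2 : g e2 = insert e2 (T₀.erase (f e2 h2)) := dif_pos h2
    rw [hge2] at he1
    rcases Finset.mem_insert.mp he1 with h' | h'
    · exact hne h'
    · exact hnot e1 h1 (Finset.mem_of_mem_erase h')
  have hZ : (1 + m * ε₀) * ∏ x ∈ T₀, c x ≤
      ∑ T ∈ Finset.univ.filter (fun T => IsSpanningTree (⊤ : SimpleGraph V) T),
        ∏ x ∈ T, c x := by
    have hc1 : (m : ℝ) * (ε₀ * ∏ x ∈ T₀, c x) = ∑ _e ∈ S, ε₀ * ∏ x ∈ T₀, c x := by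
      rw [Finset.sum_const, hScard, nsmul_eq_mul]
    calc (1 + m * ε₀) * ∏ x ∈ T₀, c x
        = (∏ x ∈ T₀, c x) + m * (ε₀ * ∏ x ∈ T₀, c x) := by ring
      _ ≤ (∏ x ∈ T₀, c x) + ∑ e ∈ S, ∏ x ∈ g e, c x := by
          rw [hc1]
          exact add_le_add_right (Finset.sum_le_sum fun e heS => (key e heS).2.2) _
      _ = ∑ T ∈ insert T₀ (S.image g), ∏ x ∈ T, c x := by
          rw [Finset.sum_insert hT₀img, hsum2]
      _ ≤ _ := Finset.sum_le_sum_of_subset_of_nonneg hAsub fun T hT _ => hnonneg T hT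
  have hfac : (0:ℝ) < 1 + m * ε₀ := by positivity
  have hden : 0 < ∑ T ∈ Finset.univ.filter (fun T => IsSpanningTree (⊤ : SimpleGraph V) T),
      ∏ x ∈ T, c x := lt_of_lt_of_le (mul_pos hfac hP₀pos) hZ
  rw [div_le_div_iff₀ hden hfac]
  nlinarith [hZ]
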